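/- Let H₁ and H₂ be real Hilbert spaces and K : H₁ → H₂ a bounded linear operator with adjoint K* and operator norm ‖K‖. Let τ, σ > 0 satisfy τσ‖K‖² < 1. Let A₁ be a maximally monotone set-valued operator on H₁ with J₁ the resolvent of τA₁, and A₂ a maximally monotone set-valued operator on H₂ with J₂ the resolvent of σA₂, and suppose there exists (u, v) ∈ H₁ × H₂ with −K*v ∈ A₁(u) and Ku ∈ A₂(v). Let u_0, u_{-1} ∈ H₁, v_0 ∈ H₂ and define, for k ≥ 0: u_{k+1} = J₁(u_k − τK*v_k) and v_{k+1} = J₂(v_k + σK u_{k+1}) + σ(K u_{k+1} − K u_k). Then the sequences (u_k) and (v_k) are bounded, i.e. there exists M > 0 with ‖u_k‖ ≤ M and ‖v_k‖ ≤ M for all k. -/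
import Mathlib


open scoped RealInnerProductSpace
open Filter

/-- A set-valued operator `A ⊆ H × H` is monotone. -/
def IsMonotoneOp {H : Type*} [NormedAddCommGroup H] [InnerProductSpace ℝ H]
    (A : Set (H × H)) : Prop :=
  ∀ p ∈ A, ∀ q ∈ A, (0 : ℝ) ≤ ⟪p.2 - q.2, p.1 - q.1⟫

/-- Maximal monotonicity. -/
def IsMaximalMonotoneOp {H : Type*} [NormedAddCommGroup H] [InnerProductSpace ℝ H]
    (A : Set (H × H)) : Prop :=
  IsMonotoneOp A ∧
    ∀ p : H × H, (∀ q ∈ A, (0 : ℝ) ≤ ⟪p.2 - q.2, p.1 - q.1⟫) → p ∈ A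

/-- The scaled operator `cA = {(x, c•u) : (x,u) ∈ A}`. -/
def smulOp {H : Type*} [NormedAddCommGroup H] [InnerProductSpace ℝ H]
    (c : ℝ) (A : Set (H × H)) : Set (H × H) :=
  (fun p : H × H => (p.1, c • p.2)) '' A

/-- Boundedness of the iterates of the new primal-dual algorithm
`u_{k+1} = J₁(u_k − τK*v_k)`, `v_{k+1} = J₂(v_k + σKu_{k+1}) + σ(Ku_{k+1} − Ku_k)`,
provided `τσ‖K‖² < 1` and a "saddle point" `(u,v)` exists. -/
theorem statement13
    {H₁ : Type*} [NormedAddCommGroup H₁] [InnerProductSpace ℝ H₁] [CompleteSpace H₁]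
    {H₂ : Type*} [NormedAddCommGroup H₂] [InnerProductSpace ℝ H₂] [CompleteSpace H₂]
    (K : H₁ →L[ℝ] H₂)
    (τ σ : ℝ) (hτ : 0 < τ) (hσ : 0 < σ) (hK : τ * σ * ‖K‖ ^ 2 < 1)
    (A₁ : Set (H₁ × H₁)) (hA₁ : IsMaximalMonotoneOp A₁)
    (A₂ : Set (H₂ × H₂)) (hA₂ : IsMaximalMonotoneOp A₂)
    (J₁ : H₁ → H₁) (hJ₁ : ∀ w : H₁, (J₁ w, w - J₁ w) ∈ smulOp τ A₁)
    (J₂ : H₂ → H₂) (hJ₂ : ∀ w : H₂, (J₂ w, w - J₂ w) ∈ smulOp σ A₂)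
    (hsaddle : ∃ (u : H₁) (v : H₂),
      (u, -(ContinuousLinearMap.adjoint K v)) ∈ A₁ ∧ (v, K u) ∈ A₂)
    (us : ℕ → H₁) (vs : ℕ → H₂)
    (hrecu : ∀ k : ℕ,
      us (k + 1) = J₁ (us k - τ • (ContinuousLinearMap.adjoint K (vs k))))
    (hrecv : ∀ k : ℕ,
      vs (k + 1) = J₂ (vs k + σ • K (us (k + 1))) + σ • (K (us (k + 1)) - K (us k))) :
    ∃ M : ℝ, 0 < M ∧ ∀ k : ℕ, ‖us k‖ ≤ M ∧ ‖vs k‖ ≤ M := by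
  obtain ⟨u, v, hu, hv⟩ := hsaddle
  set E : ℕ → ℝ := fun k =>
    σ * ⟪us k - u, us k - u⟫ + τ * ⟪vs k - v, vs k - v⟫
      - 2 * (τ * σ) * ⟪vs k - v, K (us k) - K u⟫
      + τ * σ ^ 2 * ⟪K (us k) - K u, K (us k) - K u⟫ with hE
  have hstep : ∀ k : ℕ, E (k + 1) ≤ E k := by
    intro k
    -- primal resolvent step
    obtain ⟨p, hpA, hpe⟩ := hJ₁ (us k - τ • (ContinuousLinearMap.adjoint K (vs k)))
    have hpe1 : p.1 = J₁ (us k - τ • (ContinuousLinearMap.adjoint K (vs k))) :=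
      congrArg Prod.fst hpe
    have hpe2 : τ • p.2 = us k - τ • (ContinuousLinearMap.adjoint K (vs k))
        - J₁ (us k - τ • (ContinuousLinearMap.adjoint K (vs k))) :=
      congrArg Prod.snd hpe
    rw [← hpe1] at hpe2
    have hp1 : p.1 = us (k + 1) := by rw [hpe1, ← hrecu k]
    have hm1 := hA₁.1 p hpA (u, -(ContinuousLinearMap.adjoint K v)) hu
    have h1' : (0:ℝ) ≤ ⟪τ • p.2 - τ • (-(ContinuousLinearMap.adjoint K v)), p.1 - u⟫ := by
      have h := mul_nonneg hτ.le hm1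
      rw [← real_inner_smul_left, smul_sub] at h
      exact h
    rw [hpe2, hp1] at h1'
    -- dual resolvent step
    obtain ⟨q, hqA, hqe⟩ := hJ₂ (vs k + σ • K (us (k + 1)))
    have hqe1 : q.1 = J₂ (vs k + σ • K (us (k + 1))) := congrArg Prod.fst hqe
    have hqe2 : σ • q.2 = vs k + σ • K (us (k + 1))
        - J₂ (vs k + σ • K (us (k + 1))) := congrArg Prod.snd hqe
    rw [← hqe1] at hqe2
    have hq1 : q.1 = vs (k + 1) - σ • (K (us (k + 1)) - K (us k)) := by
      rw [hqe1, hrecv k]; abel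
    have hm2 := hA₂.1 q hqA (v, K u) hv
    have h2' : (0:ℝ) ≤ ⟪σ • q.2 - σ • (K u), q.1 - v⟫ := by
      have h := mul_nonneg hσ.le hm2
      rw [← real_inner_smul_left, smul_sub] at h
      exact h
    rw [hqe2, hq1] at h2'
    -- auxiliary facts
    have h3 : (0:ℝ) ≤ ⟪(vs k - vs (k + 1)) + (2*σ) • (K (us (k + 1)) - K (us k)),
        (vs k - vs (k + 1)) + (2*σ) • (K (us (k + 1)) - K (us k))⟫ :=
      real_inner_self_nonneg
    have h5 : (0:ℝ) ≤ ⟪us (k + 1) - us k, us (k + 1) - us k⟫ := real_inner_self_nonneg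
    have h4 : ⟪K (us (k + 1)) - K (us k), K (us (k + 1)) - K (us k)⟫
        ≤ ‖K‖ ^ 2 * ⟪us (k + 1) - us k, us (k + 1) - us k⟫ := by
      have h := K.le_opNorm (us (k + 1) - us k)
      have h2 : ‖K (us (k + 1) - us k)‖ ^ 2 ≤ (‖K‖ * ‖us (k + 1) - us k‖) ^ 2 :=
        pow_le_pow_left₀ (norm_nonneg _) h 2
      rw [map_sub, mul_pow] at h2
      rw [real_inner_self_eq_norm_sq, real_inner_self_eq_norm_sq]
      exact h2
    -- expand everything into inner products of basic vectors
    simp only [hE]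
    simp only [inner_sub_left, inner_sub_right, inner_add_left, inner_add_right,
      inner_neg_left, inner_neg_right, smul_neg, neg_neg, real_inner_smul_left,
      real_inner_smul_right, ContinuousLinearMap.adjoint_inner_left, map_sub]
      at h1' h2' h3 h4 h5 ⊢
    -- normalize symmetry of the inner product
    have c1 : ⟪us (k+1), us k⟫ = ⟪us k, us (k+1)⟫ := real_inner_comm _ _
    have c2 : ⟪u, us k⟫ = ⟪us k, u⟫ := real_inner_comm _ _
    have c3 : ⟪u, us (k+1)⟫ = ⟪us (k+1), u⟫ := real_inner_comm _ _
    have d1 : ⟪vs (k+1), vs k⟫ = ⟪vs k, vs (k+1)⟫ := real_inner_comm _ _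
    have d2 : ⟪v, vs k⟫ = ⟪vs k, v⟫ := real_inner_comm _ _
    have d3 : ⟪v, vs (k+1)⟫ = ⟪vs (k+1), v⟫ := real_inner_comm _ _
    have d4 : ⟪K (us k), vs k⟫ = ⟪vs k, K (us k)⟫ := real_inner_comm _ _
    have d5 : ⟪K (us k), vs (k+1)⟫ = ⟪vs (k+1), K (us k)⟫ := real_inner_comm _ _
    have d6 : ⟪K (us k), v⟫ = ⟪v, K (us k)⟫ := real_inner_comm _ _
    have d7 : ⟪K (us (k+1)), vs k⟫ = ⟪vs k, K (us (k+1))⟫ := real_inner_comm _ _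
    have d8 : ⟪K (us (k+1)), vs (k+1)⟫ = ⟪vs (k+1), K (us (k+1))⟫ := real_inner_comm _ _
    have d9 : ⟪K (us (k+1)), v⟫ = ⟪v, K (us (k+1))⟫ := real_inner_comm _ _
    have d10 : ⟪K u, vs k⟫ = ⟪vs k, K u⟫ := real_inner_comm _ _
    have d11 : ⟪K u, vs (k+1)⟫ = ⟪vs (k+1), K u⟫ := real_inner_comm _ _
    have d12 : ⟪K u, v⟫ = ⟪v, K u⟫ := real_inner_comm _ _
    have d13 : ⟪K (us (k+1)), K (us k)⟫ = ⟪K (us k), K (us (k+1))⟫ := real_inner_comm _ _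
    have d14 : ⟪K u, K (us k)⟫ = ⟪K (us k), K u⟫ := real_inner_comm _ _
    have d15 : ⟪K u, K (us (k+1))⟫ = ⟪K (us (k+1)), K u⟫ := real_inner_comm _ _
    simp only [c1, c2, c3, d1, d2, d3, d4, d5, d6, d7, d8, d9, d10, d11, d12, d13, d14, d15]
      at h1' h2' h3 h4 h5 ⊢
    -- combine
    have hks : (0:ℝ) ≤ 1 - τ * σ * ‖K‖ ^ 2 := by linarith
    have t1 := mul_nonneg hσ.le h1'
    have t2 := mul_nonneg hτ.le h2'
    have t3 := mul_nonneg hτ.le h3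
    have t4 := mul_nonneg (mul_nonneg hσ.le hks) h5
    have t5 := mul_nonneg (mul_nonneg (mul_nonneg hτ.le hσ.le) hσ.le) (sub_nonneg.2 h4)
    linarith [t1, t2, t3, t4, t5]
  have hEmono : ∀ k : ℕ, E k ≤ E 0 := by
    intro k
    induction k with
    | zero => exact le_refl _
    | succ n ih => exact le_trans (hstep n) ih
  -- coercivity-type lower bound on E
  have hgrp : ∀ k : ℕ,
      σ * ‖us k - u‖ ^ 2 + τ * (‖vs k - v‖ - σ * ‖K (us k) - K u‖) ^ 2 ≤ E k := by
    intro k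
    have hcs := real_inner_le_norm (vs k - v) (K (us k) - K u)
    have e1 : ⟪us k - u, us k - u⟫ = ‖us k - u‖ ^ 2 := real_inner_self_eq_norm_sq _
    have e2 : ⟪vs k - v, vs k - v⟫ = ‖vs k - v‖ ^ 2 := real_inner_self_eq_norm_sq _
    have e3 : ⟪K (us k) - K u, K (us k) - K u⟫ = ‖K (us k) - K u‖ ^ 2 :=
      real_inner_self_eq_norm_sq _
    simp only [hE]
    rw [e1, e2, e3]
    have hp := mul_nonneg (mul_nonneg hτ.le hσ.le) (sub_nonneg.2 hcs)
    nlinarith [hp]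
  have hE0 : (0:ℝ) ≤ E 0 := le_trans (by positivity) (hgrp 0)
  set Ca : ℝ := Real.sqrt (E 0 / σ) with hCa
  set Cb : ℝ := σ * ‖K‖ * Ca + Real.sqrt (E 0 / τ) with hCb
  have hCa0 : 0 ≤ Ca := Real.sqrt_nonneg _
  have hCb0 : 0 ≤ Cb := by
    rw [hCb]
    have : 0 ≤ σ * ‖K‖ * Ca := by positivity
    have := Real.sqrt_nonneg (E 0 / τ)
    linarith
  have hA : ∀ k : ℕ, ‖us k - u‖ ≤ Ca := by
    intro k
    have h := le_trans (hgrp k) (hEmono k)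
    have hsq := mul_nonneg hτ.le (sq_nonneg (‖vs k - v‖ - σ * ‖K (us k) - K u‖))
    have h' : ‖us k - u‖ ^ 2 ≤ E 0 / σ := by
      rw [le_div_iff₀ hσ]; nlinarith
    calc ‖us k - u‖ = Real.sqrt (‖us k - u‖ ^ 2) := (Real.sqrt_sq (norm_nonneg _)).symm
      _ ≤ Ca := Real.sqrt_le_sqrt h'
  have hXa : ∀ k : ℕ, ‖K (us k) - K u‖ ≤ ‖K‖ * Ca := by
    intro k
    rw [← map_sub]
    exact le_trans (K.le_opNorm _) (mul_le_mul_of_nonneg_left (hA k) (norm_nonneg _))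
  have hB : ∀ k : ℕ, ‖vs k - v‖ ≤ Cb := by
    intro k
    have h := le_trans (hgrp k) (hEmono k)
    have hsq := mul_nonneg hσ.le (sq_nonneg ‖us k - u‖)
    have h' : (‖vs k - v‖ - σ * ‖K (us k) - K u‖) ^ 2 ≤ E 0 / τ := by
      rw [le_div_iff₀ hτ]; nlinarith
    have h'' : ‖vs k - v‖ - σ * ‖K (us k) - K u‖ ≤ Real.sqrt (E 0 / τ) := by
      have hs := Real.sqrt_le_sqrt h'
      rw [Real.sqrt_sq_eq_abs] at hs
      exact le_trans (le_abs_self _) hs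
    have h3 : σ * ‖K (us k) - K u‖ ≤ σ * (‖K‖ * Ca) :=
      mul_le_mul_of_nonneg_left (hXa k) hσ.le
    rw [hCb]
    linarith
  refine ⟨Ca + Cb + ‖u‖ + ‖v‖ + 1, by positivity, fun k => ⟨?_, ?_⟩⟩
  · have h := norm_add_le (us k - u) u
    rw [sub_add_cancel] at h
    have := hA k
    have := norm_nonneg v
    linarith
  · have h := norm_add_le (vs k - v) v
    rw [sub_add_cancel] at h
    have := hB k
    have := norm_nonneg u
    linarith
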